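/- Concavity deficit of the Bures χ²-divergence: let q be a probability vector on Fin d with q i ≥ γ > 0 for all i, let σ = diag(q), let ρ_1, …, ρ_T be d-dimensional quantum states, and let ρ = (1/T)∑_t ρ_t. Then (1/T)·∑_{t=1}^T (1 + D²_{Bχ}(ρ_t‖σ)) ≤ √(d/γ)·√(D²_{Bχ}(ρ‖σ)) + d. -/

import Mathlib

open scoped BigOperators ComplexOrder Matrix

noncomputable section

lemma psd_diag {d : ℕ} {M : Matrix (Fin d) (Fin d) ℂ} (hM : M.PosSemidef) (i : Fin d) :
    0 ≤ (M i i).re ∧ (M i i).im = 0 := by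
  have h := hM.dotProduct_mulVec_nonneg (Pi.single i 1 : Fin d → ℂ)
  have hx : star (Pi.single i 1 : Fin d → ℂ) ⬝ᵥ (M *ᵥ (Pi.single i 1 : Fin d → ℂ)) = M i i := by
    have hs : star (Pi.single i 1 : Fin d → ℂ) = (Pi.single i 1 : Fin d → ℂ) := by
      funext k
      by_cases hk : k = i <;> simp [Pi.single_apply, hk]
    rw [hs, Matrix.mulVec_single, single_dotProduct]
    simp
  rw [hx] at h
  obtain ⟨h1, h2⟩ := Complex.nonneg_iff.mp h
  exact ⟨h1, h2.symm⟩

lemma psd_entry_sq {d : ℕ} {M : Matrix (Fin d) (Fin d) ℂ} (hM : M.PosSemidef)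
    (i j : Fin d) : ‖M i j‖ ^ 2 ≤ (M i i).re * (M j j).re := by
  obtain ⟨hi0, hiim⟩ := psd_diag hM i
  obtain ⟨hj0, hjim⟩ := psd_diag hM j
  rcases eq_or_ne i j with rfl | hij
  · rw [Complex.sq_norm, Complex.normSq_apply, hiim]
    nlinarith
  · have hji : M j i = (starRingEnd ℂ) (M i j) := by
      rw [starRingEnd_apply, ← hM.1.apply i j, star_star]
    set m := M i j with hm
    set C := Complex.normSq m with hC
    have key : ∀ t : ℝ, 0 ≤ (C * (M i i).re) * (t * t) + (-(2 * C)) * t + (M j j).re := by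
      intro t
      set c : ℂ := -(t : ℂ) * m with hc
      set x : Fin d → ℂ := c • (Pi.single i 1 : Fin d → ℂ) + (Pi.single j 1 : Fin d → ℂ) with hxdef
      have h := hM.dotProduct_mulVec_nonneg x
      have hx : star x ⬝ᵥ (M *ᵥ x) =
          (starRingEnd ℂ) c * c * M i i + (starRingEnd ℂ) c * m + c * M j i + M j j := by
        have hsi : star (Pi.single i 1 : Fin d → ℂ) = (Pi.single i 1 : Fin d → ℂ) := by
          funext k; by_cases hk : k = i <;> simp [Pi.single_apply, hk]
        have hsj : star (Pi.single j 1 : Fin d → ℂ) = (Pi.single j 1 : Fin d → ℂ) := by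
          funext k; by_cases hk : k = j <;> simp [Pi.single_apply, hk]
        rw [hxdef]
        rw [star_add, star_smul, hsi, hsj, Matrix.mulVec_add, Matrix.mulVec_smul,
          Matrix.mulVec_single, Matrix.mulVec_single]
        simp only [add_dotProduct, smul_dotProduct, dotProduct_add,
          dotProduct_smul, single_dotProduct, smul_eq_mul, Pi.add_apply,
          Pi.smul_apply, mul_one, Complex.star_def, MulOpposite.op_one, one_smul, Matrix.col_apply, map_neg, map_mul, Complex.conj_ofReal]
        ring
      rw [hx, hji] at h
      obtain ⟨h1, -⟩ := Complex.nonneg_iff.mp h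
      have hre : ((starRingEnd ℂ) c * c * M i i + (starRingEnd ℂ) c * m +
          c * (starRingEnd ℂ) m + M j j).re
          = (C * (M i i).re) * (t * t) + (-(2 * C)) * t + (M j j).re := by
        rw [hc, hC]
        simp [Complex.add_re, Complex.mul_re, Complex.mul_im, Complex.conj_re, Complex.conj_im,
          Complex.normSq_apply]
        ring
      rw [hre] at h1
      exact h1
    have hdisc := discrim_le_zero key
    rw [discrim] at hdisc
    have hC0 : 0 ≤ C := Complex.normSq_nonneg m
    have habs : ‖m‖ ^ 2 = C := Complex.sq_norm m
    rcases eq_or_lt_of_le hC0 with hCz | hCp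
    · rw [habs, ← hCz]; positivity
    · rw [habs]; nlinarith

/-- A `d`-dimensional quantum state: positive semidefinite with trace 1. -/
def IsState {d : ℕ} (ρ : Matrix (Fin d) (Fin d) ℂ) : Prop :=
  ρ.PosSemidef ∧ ρ.trace = 1

/-- Average of `T` states. -/
def avgState {d T : ℕ} (ρ : Fin T → Matrix (Fin d) (Fin d) ℂ) :
    Matrix (Fin d) (Fin d) ℂ :=
  ((T : ℂ))⁻¹ • ∑ t, ρ t

/-- Bures χ²-divergence of `ρ` from `σ = diag q`. -/
def DBchi {d : ℕ} (q : Fin d → ℝ) (ρ : Matrix (Fin d) (Fin d) ℂ) : ℝ :=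
  (∑ i, ∑ j, (2 / (q i + q j)) * ‖ρ i j‖ ^ 2) - 1

/-- Concavity deficit of the Bures χ²-divergence. -/
theorem concavity_deficit_Bures_chisq (d T : ℕ) (hT : 1 ≤ T) (γ : ℝ) (hγ : 0 < γ)
    (q : Fin d → ℝ) (hq : ∀ i, γ ≤ q i) (hq1 : (∑ i, q i) = 1)
    (ρ : Fin T → Matrix (Fin d) (Fin d) ℂ) (hρ : ∀ t, IsState (ρ t)) :
    ((T : ℝ))⁻¹ * ∑ t, (1 + DBchi q (ρ t)) ≤
      Real.sqrt ((d : ℝ) / γ) * Real.sqrt (DBchi q (avgState ρ)) + d := by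
  have hT0 : (0:ℝ) < T := by exact_mod_cast hT
  have hq0 : ∀ i, 0 < q i := fun i => lt_of_lt_of_le hγ (hq i)
  set a : Fin T → Fin d → ℝ := fun t i => (ρ t i i).re with ha
  have ha0 : ∀ t i, 0 ≤ a t i := fun t i => (psd_diag (hρ t).1 i).1
  have htr : ∀ t, ∑ i, a t i = 1 := by
    intro t
    have h := congrArg Complex.re (hρ t).2
    simpa [Matrix.trace, Matrix.diag, Complex.re_sum] using h
  -- Step 1: per-state bound
  have step1 : ∀ t, 1 + DBchi q (ρ t) ≤ ∑ i, a t i / q i := by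
    intro t
    have expand : 1 + DBchi q (ρ t)
        = ∑ i, ∑ j, (2 / (q i + q j)) * ‖ρ t i j‖ ^ 2 := by
      unfold DBchi; ring
    rw [expand]
    have hterm : ∀ i j, (2 / (q i + q j)) * ‖ρ t i j‖ ^ 2
        ≤ (a t i / Real.sqrt (q i)) * (a t j / Real.sqrt (q j)) := by
      intro i j
      have hsi : Real.sqrt (q i) * Real.sqrt (q i) = q i := Real.mul_self_sqrt (hq0 i).le
      have hsj : Real.sqrt (q j) * Real.sqrt (q j) = q j := Real.mul_self_sqrt (hq0 j).le
      have hsip : 0 < Real.sqrt (q i) := Real.sqrt_pos.mpr (hq0 i)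
      have hsjp : 0 < Real.sqrt (q j) := Real.sqrt_pos.mpr (hq0 j)
      have h1 : 2 / (q i + q j) ≤ 1 / (Real.sqrt (q i) * Real.sqrt (q j)) := by
        rw [div_le_div_iff₀ (by linarith [hq0 i, hq0 j]) (by positivity)]
        nlinarith [two_mul_le_add_sq (Real.sqrt (q i)) (Real.sqrt (q j)), Real.sq_sqrt (hq0 i).le,
          Real.sq_sqrt (hq0 j).le]
      have h2 : ‖ρ t i j‖ ^ 2 ≤ a t i * a t j := psd_entry_sq (hρ t).1 i j
      calc (2 / (q i + q j)) * ‖ρ t i j‖ ^ 2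
          ≤ (1 / (Real.sqrt (q i) * Real.sqrt (q j))) * (a t i * a t j) :=
            mul_le_mul h1 h2 (by positivity) (by positivity)
        _ = (a t i / Real.sqrt (q i)) * (a t j / Real.sqrt (q j)) := by
            rw [one_div, inv_mul_eq_div, div_mul_div_comm]
    calc ∑ i, ∑ j, (2 / (q i + q j)) * ‖ρ t i j‖ ^ 2
        ≤ ∑ i, ∑ j, (a t i / Real.sqrt (q i)) * (a t j / Real.sqrt (q j)) :=
          Finset.sum_le_sum (fun i _ => Finset.sum_le_sum (fun j _ => hterm i j))
      _ = (∑ i, a t i / Real.sqrt (q i)) ^ 2 := by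
          rw [sq, Finset.sum_mul_sum]
      _ ≤ (∑ i, a t i) * (∑ i, a t i / q i) := by
          have hcs := Finset.sum_mul_sq_le_sq_mul_sq Finset.univ
            (fun i => Real.sqrt (a t i)) (fun i => Real.sqrt (a t i) / Real.sqrt (q i))
          have e1 : ∀ i : Fin d, Real.sqrt (a t i) * (Real.sqrt (a t i) / Real.sqrt (q i))
              = a t i / Real.sqrt (q i) := by
            intro i
            rw [mul_div_assoc', Real.mul_self_sqrt (ha0 t i)]
          have e2 : ∀ i : Fin d, Real.sqrt (a t i) ^ 2 = a t i :=
            fun i => Real.sq_sqrt (ha0 t i)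
          have e3 : ∀ i : Fin d, (Real.sqrt (a t i) / Real.sqrt (q i)) ^ 2 = a t i / q i := by
            intro i
            rw [div_pow, Real.sq_sqrt (ha0 t i), Real.sq_sqrt (hq0 i).le]
          simp only [e1, e2, e3] at hcs
          exact hcs
      _ = ∑ i, a t i / q i := by rw [htr t, one_mul]
  -- the averaged diagonal
  set p : Fin d → ℝ := fun i => (T:ℝ)⁻¹ * ∑ t, a t i with hp
  have hpavg : ∀ i, (avgState ρ i i).re = p i := by
    intro i
    simp only [avgState, Matrix.smul_apply, Matrix.sum_apply, smul_eq_mul, hp]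
    have : ((T:ℂ))⁻¹ = (((T:ℝ)⁻¹ : ℝ) : ℂ) := by push_cast; ring
    rw [this, Complex.re_ofReal_mul, Complex.re_sum]
  have hpsum : ∑ i, p i = 1 := by
    simp only [hp, ← Finset.mul_sum]
    rw [Finset.sum_comm]
    have : ∑ t, ∑ i, a t i = (T:ℝ) := by
      rw [Finset.sum_congr rfl (fun t _ => htr t)]
      simp
    rw [this, inv_mul_cancel₀ (ne_of_gt hT0)]
  -- Step 2: average
  have step2 : ((T : ℝ))⁻¹ * ∑ t, (1 + DBchi q (ρ t)) ≤ ∑ i, p i / q i := by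
    have h1 : ∑ t, (1 + DBchi q (ρ t)) ≤ ∑ t, ∑ i, a t i / q i :=
      Finset.sum_le_sum (fun t _ => step1 t)
    have h2 : (T:ℝ)⁻¹ * ∑ t, ∑ i, a t i / q i = ∑ i, p i / q i := by
      rw [Finset.sum_comm, Finset.mul_sum]
      refine Finset.sum_congr rfl (fun i _ => ?_)
      rw [hp]
      rw [← Finset.sum_div, mul_div_assoc]
    calc ((T : ℝ))⁻¹ * ∑ t, (1 + DBchi q (ρ t))
        ≤ (T:ℝ)⁻¹ * ∑ t, ∑ i, a t i / q i := by
          exact mul_le_mul_of_nonneg_left h1 (by positivity)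
      _ = ∑ i, p i / q i := h2
  -- Step 3
  have step3 : ∑ i, p i / q i = d + ∑ i, (p i - q i) / q i := by
    have : ∀ i : Fin d, p i / q i = 1 + (p i - q i) / q i := by
      intro i
      have hne : q i ≠ 0 := (hq0 i).ne'
      field_simp
      ring
    rw [Finset.sum_congr rfl (fun i _ => this i), Finset.sum_add_distrib]
    simp
  -- Step 4: Cauchy-Schwarz
  have step4 : ∑ i, (p i - q i) / q i ≤
      Real.sqrt (∑ i, 1 / q i) * Real.sqrt (∑ i, (p i - q i) ^ 2 / q i) := by
    have hcs := Real.sum_mul_le_sqrt_mul_sqrt Finset.univ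
      (fun i => 1 / Real.sqrt (q i)) (fun i => (p i - q i) / Real.sqrt (q i))
    have e1 : ∀ i : Fin d, (1 / Real.sqrt (q i)) * ((p i - q i) / Real.sqrt (q i))
        = (p i - q i) / q i := by
      intro i
      rw [div_mul_div_comm, one_mul, Real.mul_self_sqrt (hq0 i).le]
    have e2 : ∀ i : Fin d, (1 / Real.sqrt (q i)) ^ 2 = 1 / q i := by
      intro i
      rw [div_pow, one_pow, Real.sq_sqrt (hq0 i).le]
    have e3 : ∀ i : Fin d, ((p i - q i) / Real.sqrt (q i)) ^ 2 = (p i - q i) ^ 2 / q i := by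
      intro i
      rw [div_pow, Real.sq_sqrt (hq0 i).le]
    simp only [e1, e2, e3] at hcs
    exact hcs
  -- Step 5
  have step5 : ∑ i, 1 / q i ≤ (d : ℝ) / γ := by
    calc ∑ i, 1 / q i ≤ ∑ _i : Fin d, 1 / γ :=
        Finset.sum_le_sum (fun i _ => one_div_le_one_div_of_le hγ (hq i))
      _ = (d : ℝ) / γ := by
        rw [Finset.sum_const, Finset.card_univ, Fintype.card_fin, nsmul_eq_mul, mul_one_div]
  -- Step 6
  have step6 : ∑ i, (p i - q i) ^ 2 / q i ≤ DBchi q (avgState ρ) := by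
    have hdiag : ∀ i : Fin d, (1 / q i) * p i ^ 2 ≤
        ∑ j, (2 / (q i + q j)) * ‖avgState ρ i j‖ ^ 2 := by
      intro i
      have hterm : (1 / q i) * p i ^ 2 ≤ (2 / (q i + q i)) * ‖avgState ρ i i‖ ^ 2 := by
        have h1 : 2 / (q i + q i) = 1 / q i := by
          have hne : q i ≠ 0 := (hq0 i).ne'
          rw [← two_mul]
          field_simp
        rw [h1]
        have h2 : p i ^ 2 ≤ ‖avgState ρ i i‖ ^ 2 := by
          rw [Complex.sq_norm, Complex.normSq_apply, ← hpavg i]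
          nlinarith [sq_nonneg (avgState ρ i i).im]
        exact mul_le_mul_of_nonneg_left h2 (one_div_nonneg.mpr (hq0 i).le)
      refine le_trans hterm ?_
      refine Finset.single_le_sum
        (f := fun j => (2 / (q i + q j)) * ‖avgState ρ i j‖ ^ 2)
        (fun j _ => ?_) (Finset.mem_univ i)
      have hqq : 0 < q i + q j := by linarith [hq0 i, hq0 j]
      exact mul_nonneg (div_nonneg (by norm_num) hqq.le) (by positivity)
    have hsum : ∑ i, (1 / q i) * p i ^ 2 ≤
        ∑ i, ∑ j, (2 / (q i + q j)) * ‖avgState ρ i j‖ ^ 2 :=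
      Finset.sum_le_sum (fun i _ => hdiag i)
    have halg : ∑ i, (1 / q i) * p i ^ 2 = (∑ i, (p i - q i) ^ 2 / q i) + 1 := by
      have : ∀ i : Fin d, (1 / q i) * p i ^ 2 = (p i - q i) ^ 2 / q i + (2 * p i - q i) := by
        intro i
        have hne : q i ≠ 0 := (hq0 i).ne'
        field_simp
        ring
      rw [Finset.sum_congr rfl (fun i _ => this i), Finset.sum_add_distrib, Finset.sum_sub_distrib,
        ← Finset.mul_sum, hpsum, hq1]
      ring
    unfold DBchi
    linarith
  -- assemble
  calc ((T : ℝ))⁻¹ * ∑ t, (1 + DBchi q (ρ t))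
      ≤ ∑ i, p i / q i := step2
    _ = d + ∑ i, (p i - q i) / q i := step3
    _ ≤ d + Real.sqrt ((d : ℝ) / γ) * Real.sqrt (DBchi q (avgState ρ)) := by
        have h1 : Real.sqrt (∑ i, 1 / q i) ≤ Real.sqrt ((d : ℝ) / γ) :=
          Real.sqrt_le_sqrt step5
        have h2 : Real.sqrt (∑ i, (p i - q i) ^ 2 / q i) ≤ Real.sqrt (DBchi q (avgState ρ)) :=
          Real.sqrt_le_sqrt step6
        have := mul_le_mul h1 h2 (Real.sqrt_nonneg _) (Real.sqrt_nonneg _)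
        linarith [step4]
    _ = Real.sqrt ((d : ℝ) / γ) * Real.sqrt (DBchi q (avgState ρ)) + d := by ring
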